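/- Let V : ℝ × ℤ → Mat(m×m, ℂ) be invertible and entrywise differentiable in t, satisfying V_t = V_{(−1)}^{-1} − V_{(1)}^{-1} (the generalized Volterra lattice equation with k = 1, l = −1). Then U := V^{-1} satisfies the modified Volterra lattice equation U_t = U (U_{(1)} − U_{(−1)}) U. -/

import Mathlib

open Matrix

/-- if `V` is invertible, entrywise differentiable in `t`, and satisfies the
generalized Volterra lattice equation `V_t = V_{(−1)}⁻¹ − V_{(1)}⁻¹` (case `k = 1`, `l = −1`),
then `U := V⁻¹` satisfies the modified Volterra lattice equation
`U_t = U (U_{(1)} − U_{(−1)}) U`. -/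
theorem stmt_2 (m : ℕ) (V Vt : ℝ → ℤ → Matrix (Fin m) (Fin m) ℂ)
    (hVinv : ∀ t j, IsUnit (V t j))
    (hVt : ∀ t j (a b : Fin m), HasDerivAt (fun s => V s j a b) (Vt t j a b) t)
    (heq : ∀ t j, Vt t j = (V t (j - 1))⁻¹ - (V t (j + 1))⁻¹) :
    ∀ t j (a b : Fin m),
      HasDerivAt (fun s => (V s j)⁻¹ a b)
        (((V t j)⁻¹ * ((V t (j + 1))⁻¹ - (V t (j - 1))⁻¹) * (V t j)⁻¹) a b) t := by
  intro t j a b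
  letI : SeminormedRing (Matrix (Fin m) (Fin m) ℂ) := Matrix.linftyOpSemiNormedRing
  letI : NormedRing (Matrix (Fin m) (Fin m) ℂ) := Matrix.linftyOpNormedRing
  letI : NormedAlgebra ℝ (Matrix (Fin m) (Fin m) ℂ) := Matrix.linftyOpNormedAlgebra
  letI : CompleteSpace (Matrix (Fin m) (Fin m) ℂ) := FiniteDimensional.complete ℂ _
  -- linear equivalence with the pi type
  let e : Matrix (Fin m) (Fin m) ℂ ≃L[ℝ] (Fin m → Fin m → ℂ) :=
    LinearEquiv.toContinuousLinearEquiv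
      (LinearEquiv.refl ℝ (Matrix (Fin m) (Fin m) ℂ) :
        Matrix (Fin m) (Fin m) ℂ ≃ₗ[ℝ] (Fin m → Fin m → ℂ))
  -- derivative of the matrix-valued map
  have h1 : HasDerivAt (fun s => V s j) (Vt t j) t := by
    have hpi : HasDerivAt (fun s => e (V s j)) (e (Vt t j)) t := by
      rw [hasDerivAt_pi]
      intro a
      rw [hasDerivAt_pi]
      intro b
      exact hVt t j a b
    have := e.symm.hasFDerivAt.comp_hasDerivAt t hpi.hasFDerivAt
    exact this
  -- derivative of the inversion map at the unit `V t j`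
  have h2 : HasFDerivAt Ring.inverse
      (-ContinuousLinearMap.mulLeftRight ℝ _ (((hVinv t j).unit⁻¹ : _) : Matrix (Fin m) (Fin m) ℂ)
        (((hVinv t j).unit⁻¹ : _) : Matrix (Fin m) (Fin m) ℂ)) (V t j) := by
    have := hasFDerivAt_ringInverse (𝕜 := ℝ) (hVinv t j).unit
    rwa [(hVinv t j).unit_spec] at this
  have h3 : HasDerivAt (fun s => Ring.inverse (V s j))
      (-(((hVinv t j).unit⁻¹ : Matrix (Fin m) (Fin m) ℂ) * Vt t j *
        ((hVinv t j).unit⁻¹ : Matrix (Fin m) (Fin m) ℂ))) t := by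
    have := h2.comp_hasDerivAt t h1
    simp at this ⊢
    exact this
  have hcoe : (((hVinv t j).unit : Matrix (Fin m) (Fin m) ℂ))⁻¹ = (V t j)⁻¹ := by
    rw [(hVinv t j).unit_spec]
  rw [hcoe] at h3
  have hfun : (fun s => Ring.inverse (V s j)) = fun s => (V s j)⁻¹ := by
    funext s; rw [Matrix.nonsing_inv_eq_ringInverse]
  rw [hfun] at h3
  have hval : -((V t j)⁻¹ * Vt t j * (V t j)⁻¹) =
      (V t j)⁻¹ * ((V t (j + 1))⁻¹ - (V t (j - 1))⁻¹) * (V t j)⁻¹ := by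
    rw [heq t j]
    noncomm_ring
  rw [hval] at h3
  -- pass to entries via a continuous linear map
  let ℓ : Matrix (Fin m) (Fin m) ℂ →L[ℝ] ℂ :=
    (ContinuousLinearMap.proj b).comp
      ((ContinuousLinearMap.proj a).comp (e : Matrix (Fin m) (Fin m) ℂ →L[ℝ] (Fin m → Fin m → ℂ)))
  have := ℓ.hasFDerivAt.comp_hasDerivAt t h3
  exact this
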